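/- Let N₁,…,N_k ≥ 5 be integers, Λ₀ = N₁ℤ × ⋯ × N_kℤ ≤ ℤ^k, and let R ⊆ ℤ^k be obtained from the box R₀ = {0,…,N₁−1} × ⋯ × {0,…,N_k−1} by choosing integers n_j with 2 ≤ n_j ≤ N_j − 3, deleting the points (n₁,…,n_{j−1},0,n_{j+1},…,n_k) for each j = 1,…,k, and adding the points (n₁,…,n_{j−1},N_j,n_{j+1},…,n_k). Then a set A ⊆ ℤ^k satisfies A ⊕ R = ℤ^k if and only if A is a coset of Λ₀. -/

import Mathlib

open Pointwise

/-- `A ⊕ F` is defined: all sums `a + f` with `a ∈ A`, `f ∈ F` are distinct. -/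
def DistinctSums {G : Type*} [AddCommGroup G] (A F : Set G) : Prop :=
  ∀ a ∈ A, ∀ f ∈ F, ∀ a' ∈ A, ∀ f' ∈ F, a + f = a' + f' → a = a' ∧ f = f'

set_option linter.unusedSectionVars false

namespace Stmt4

variable {k : ℕ}

def Rset (N n : Fin k → ℤ) : Set (Fin k → ℤ) :=
  ({x : Fin k → ℤ | ∀ j, 0 ≤ x j ∧ x j < N j} \
      Set.range (fun j => Function.update n j 0)) ∪
      Set.range (fun j => Function.update n j (N j))

section
variable {N n : Fin k → ℤ}

lemma mem_Rset_box {x : Fin k → ℤ} (hb : ∀ j, 0 ≤ x j ∧ x j < N j)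
    (hP : x ∉ Set.range (fun j => Function.update n j 0)) : x ∈ Rset N n :=
  Or.inl ⟨hb, hP⟩

lemma mem_Rset_q (i : Fin k) : Function.update n i (N i) ∈ Rset N n :=
  Or.inr ⟨i, rfl⟩

lemma dvd_eq_of_bounds {a b Nj : ℤ} (h : Nj ∣ a - b) (h1 : 0 ≤ a) (h2 : a < Nj)
    (h3 : 0 ≤ b) (h4 : b < Nj) : a = b := by
  have := Int.eq_zero_of_abs_lt_dvd h (by rw [abs_lt]; omega)
  omega

lemma notP_of_ne {x : Fin k → ℤ} (i : Fin k) (h0 : x i ≠ 0) (hni : x i ≠ n i) :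
    x ∉ Set.range (fun j => Function.update n j 0) := by
  rintro ⟨m, hm⟩
  rcases eq_or_ne i m with rfl | hne
  · apply h0; rw [← hm]; simp
  · apply hni; rw [← hm]; simp [Function.update_apply, hne]

lemma notP_all_pos {x : Fin k → ℤ} (h : ∀ i, x i ≠ 0) :
    x ∉ Set.range (fun j => Function.update n j 0) := by
  rintro ⟨m, hm⟩
  exact h m (by rw [← hm]; simp)

variable (hN : ∀ j, 5 ≤ N j) (hn : ∀ j, 2 ≤ n j ∧ n j ≤ N j - 3)
include hN hn

lemma p_not_mem (j : Fin k) : Function.update n j 0 ∉ Rset N n := by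
  intro h
  rcases h with ⟨_, hP⟩ | ⟨i, hi⟩
  · exact hP ⟨j, rfl⟩
  · have hi2 : Function.update n i (N i) = Function.update n j 0 := hi
    have h0 := congrFun hi2 i
    have h1 := hN i; have h2 := hn i; have h3 := hn j
    rw [Function.update_self, Function.update_apply] at h0
    rcases eq_or_ne i j with rfl | hne
    · rw [if_pos rfl] at h0; omega
    · rw [if_neg hne] at h0; omega

lemma n_mem : n ∈ Rset N n := by
  refine mem_Rset_box (fun l => ?_) (notP_all_pos fun i => ?_)
  · have := hN l; have := hn l; constructor <;> omega
  · have := hn i; omega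

lemma rep_exists (x : Fin k → ℤ) : ∃ r ∈ Rset N n, ∀ j, N j ∣ x j - r j := by
  set c : Fin k → ℤ := fun j => x j % N j with hc
  have hcb : ∀ j, 0 ≤ c j ∧ c j < N j := fun j =>
    ⟨Int.emod_nonneg _ (by have := hN j; omega), Int.emod_lt_of_pos _ (by have := hN j; omega)⟩
  have hdvd : ∀ j, N j ∣ x j - c j := by
    intro j
    exact ⟨x j / N j, by rw [hc]; simp only; rw [Int.emod_def]; ring⟩
  by_cases h : ∃ i, Function.update n i 0 = c
  · obtain ⟨i, hi⟩ := h
    refine ⟨Function.update n i (N i), mem_Rset_q i, fun j => ?_⟩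
    rcases eq_or_ne j i with rfl | hne
    · rw [Function.update_self]
      have hci : c j = 0 := by rw [← hi]; simp
      have h1 : N j ∣ x j := by have := hdvd j; rw [hci] at this; simpa using this
      exact dvd_sub h1 dvd_rfl
    · rw [Function.update_apply, if_neg hne]
      have hci : c j = n j := by rw [← hi]; simp [Function.update_apply, hne]
      rw [← hci]; exact hdvd j
  · exact ⟨c, mem_Rset_box hcb (fun hr => h (by obtain ⟨i, hi⟩ := hr; exact ⟨i, hi⟩)), hdvd⟩

lemma Rset_inj {r r' : Fin k → ℤ} (hr : r ∈ Rset N n) (hr' : r' ∈ Rset N n)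
    (h : ∀ j, N j ∣ r j - r' j) : r = r' := by
  have key : ∀ s s' : Fin k → ℤ, s ∈ Rset N n →
      (∀ j, 0 ≤ s' j ∧ s' j < N j) → s' ∉ Set.range (fun j => Function.update n j 0) →
      (∀ j, N j ∣ s j - s' j) → s = s' := by
    intro s s' hs hb' hP' hd
    rcases hs with ⟨hb, _⟩ | ⟨i, hi⟩
    · funext j
      exact dvd_eq_of_bounds (hd j) (hb j).1 (hb j).2 (hb' j).1 (hb' j).2
    · exfalso
      have hi2 : Function.update n i (N i) = s := hi
      apply hP'
      refine ⟨i, ?_⟩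
      show Function.update n i 0 = s'
      funext j
      rw [Function.update_apply]
      rcases eq_or_ne j i with rfl | hne
      · rw [if_pos rfl]
        have hdd := hd j; rw [← hi2] at hdd
        rw [Function.update_self] at hdd
        have h3 : N j ∣ s' j := by
          have := dvd_sub (dvd_refl (N j)) hdd; simpa using this
        exact (dvd_eq_of_bounds (by simpa using h3) (hb' j).1 (hb' j).2 (le_refl 0)
          (by have := hN j; omega)).symm
      · rw [if_neg hne]
        have := hd j; rw [← hi2] at this
        rw [Function.update_apply, if_neg hne] at this
        have h1 := hn j; have h2 := hN j; have h3 := hb' j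
        exact dvd_eq_of_bounds this (by omega) (by omega) h3.1 h3.2
  rcases hr' with ⟨hb', hP'⟩ | ⟨i, hi⟩
  · exact key r r' hr hb' hP' h
  · rcases hr with ⟨hb, hP⟩ | ⟨i', hi'⟩
    · exact (key r' r (Or.inr ⟨i, hi⟩) hb hP (fun j => (dvd_sub_comm).mp (h j))).symm
    · -- both q's
      have hi2 : Function.update n i (N i) = r' := hi
      have hi2' : Function.update n i' (N i') = r := hi'
      rcases eq_or_ne i i' with rfl | hne
      · rw [← hi2, ← hi2']
      · exfalso
        have := h i
        rw [← hi2, ← hi2'] at this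
        rw [Function.update_self, Function.update_apply, if_neg hne] at this
        have h1 := hn i; have h2 := hN i
        have hdd : N i ∣ n i := by
          have := dvd_add this (dvd_refl (N i)); simpa using this
        have := Int.eq_zero_of_abs_lt_dvd hdd (by rw [abs_lt]; omega)
        omega

set_option linter.unusedSectionVars false in
lemma claimC (j : Fin k) (r' : Fin k → ℤ) (hr' : r' ∈ Rset N n)
    (hne : r' ≠ Function.update n j (N j)) :
    ∃ f ∈ Rset N n, ∃ f' ∈ Rset N n,
      ∀ l, f l - f' l = Function.update n j 0 l - r' l := by
  rcases hr' with ⟨hbox, hP⟩ | ⟨i, hi⟩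
  · -- r' in box minus P
    have hb : ∀ l, 0 ≤ r' l ∧ r' l < N l := hbox
    by_cases hrj : r' j ≤ N j - 2
    · -- main case
      obtain ⟨c, hcr, hcn⟩ : ∃ c : ℤ, (c = 1 ∨ (c = 2 ∧ r' j + 1 = n j)) ∧ c + r' j ≠ n j := by
        by_cases h : r' j + 1 = n j
        · exact ⟨2, Or.inr ⟨rfl, h⟩, by omega⟩
        · exact ⟨1, Or.inl rfl, by omega⟩
      refine ⟨(fun l => if l = j then c else n l), ?_,
        (fun l => if l = j then c + r' j else r' l), ?_, ?_⟩
      · refine mem_Rset_box (fun l => ?_) (notP_all_pos fun l => ?_)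
        · rcases eq_or_ne l j with rfl | hlj
          · rw [if_pos rfl]; have := hN l; omega
          · rw [if_neg hlj]; have := hN l; have := hn l; omega
        · rcases eq_or_ne l j with rfl | hlj
          · rw [if_pos rfl]; omega
          · rw [if_neg hlj]; have := hn l; omega
      · refine mem_Rset_box (fun l => ?_) (notP_of_ne j ?_ ?_)
        · rcases eq_or_ne l j with rfl | hlj
          · rw [if_pos rfl]; have := hb l; have := hn l; omega
          · rw [if_neg hlj]; exact hb l
        · rw [if_pos rfl]; have := hb j; omega
        · rw [if_pos rfl]; exact hcn
      · intro l
        simp only [Function.update_apply]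
        rcases eq_or_ne l j with rfl | hlj
        · rw [if_pos rfl, if_pos rfl, if_pos rfl]; ring
        · rw [if_neg hlj, if_neg hlj, if_neg hlj]
    · -- r' j = N j - 1
      have hrj' : r' j = N j - 1 := by have := hb j; omega
      by_cases hk : ∃ i, i ≠ j
      · obtain ⟨i, hij⟩ := hk
        have hji : ¬ (j = i) := fun h => hij h.symm
        have hd : ∃ u v : ℤ, (0 ≤ u ∧ u < N i ∧ u ≠ 0 ∧ u ≠ n i) ∧ (0 ≤ v ∧ v < N i) ∧
            u - v = n i - r' i := by
          have h1 := hn i; have h2 := hN i; have h3 := hb i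
          rcases le_or_gt (r' i) (N i - 2) with h | h
          · exact ⟨n i + 1, r' i + 1, ⟨by omega, by omega, by omega, by omega⟩,
              ⟨by omega, by omega⟩, by ring⟩
          · exact ⟨n i - 1, r' i - 1, ⟨by omega, by omega, by omega, by omega⟩,
              ⟨by omega, by omega⟩, by ring⟩
        obtain ⟨u, v, hu, hv, huv⟩ := hd
        refine ⟨(fun l => if l = j then 0 else if l = i then u else n l), ?_,
          (fun l => if l = j then N j - 1 else if l = i then v else r' l), ?_, ?_⟩
        · refine mem_Rset_box (fun l => ?_) (notP_of_ne i ?_ ?_)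
          · rcases eq_or_ne l j with rfl | hlj
            · rw [if_pos rfl]; have := hN l; omega
            · rw [if_neg hlj]
              rcases eq_or_ne l i with rfl | hli
              · rw [if_pos rfl]; exact ⟨hu.1, hu.2.1⟩
              · rw [if_neg hli]; have := hn l; have := hN l; omega
          · rw [if_neg hij, if_pos rfl]; exact hu.2.2.1
          · rw [if_neg hij, if_pos rfl]; exact hu.2.2.2
        · refine mem_Rset_box (fun l => ?_) (notP_of_ne j ?_ ?_)
          · rcases eq_or_ne l j with rfl | hlj
            · rw [if_pos rfl]; have := hN l; omega
            · rw [if_neg hlj]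
              rcases eq_or_ne l i with rfl | hli
              · rw [if_pos rfl]; exact hv
              · rw [if_neg hli]; exact hb l
          · rw [if_pos rfl]; have := hN j; omega
          · rw [if_pos rfl]; have := hn j; have := hN j; omega
        · intro l
          simp only [Function.update_apply]
          rcases eq_or_ne l j with rfl | hlj
          · rw [if_pos rfl, if_pos rfl, if_pos rfl, hrj']
          · rw [if_neg hlj, if_neg hlj, if_neg hlj]
            rcases eq_or_ne l i with rfl | hli
            · rw [if_pos rfl, if_pos rfl]; omega
            · rw [if_neg hli, if_neg hli]
      · -- k = 1 essentially: every index equals j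
        push_neg at hk
        refine ⟨(fun _ => 1), ?_, Function.update n j (N j), mem_Rset_q j, ?_⟩
        · refine mem_Rset_box (fun l => ?_) (notP_of_ne j ?_ ?_)
          · have := hN l; omega
          · omega
          · have := hn j; omega
        · intro l
          have := hk l; subst this
          rw [Function.update_self, Function.update_self, hrj']
          ring
  · -- r' = q i
    have hi2 : Function.update n i (N i) = r' := hi
    have hij : i ≠ j := by rintro rfl; exact hne hi2.symm
    have hji : ¬ (j = i) := fun h => hij h.symm
    refine ⟨(fun l => if l = j then 1 else if l = i then n i - 1 else 0), ?_,
      (fun l => if l = j then n j + 1 else if l = i then N i - 1 else 0), ?_, ?_⟩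
    · refine mem_Rset_box (fun l => ?_) (notP_of_ne j ?_ ?_)
      · rcases eq_or_ne l j with rfl | hlj
        · rw [if_pos rfl]; have := hN l; omega
        · rw [if_neg hlj]
          rcases eq_or_ne l i with rfl | hli
          · rw [if_pos rfl]; have := hn l; have := hN l; omega
          · rw [if_neg hli]; have := hN l; omega
      · rw [if_pos rfl]; omega
      · rw [if_pos rfl]; have := hn j; omega
    · refine mem_Rset_box (fun l => ?_) (notP_of_ne j ?_ ?_)
      · rcases eq_or_ne l j with rfl | hlj
        · rw [if_pos rfl]; have := hn l; have := hN l; omega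
        · rw [if_neg hlj]
          rcases eq_or_ne l i with rfl | hli
          · rw [if_pos rfl]; have := hN l; omega
          · rw [if_neg hli]; have := hN l; omega
      · rw [if_pos rfl]; have := hn j; omega
      · rw [if_pos rfl]; omega
    · intro l
      rw [← hi2]
      simp only [Function.update_apply]
      rcases eq_or_ne l j with rfl | hlj
      · rw [if_pos rfl, if_pos rfl, if_pos rfl, if_neg hji]; ring
      · rw [if_neg hlj, if_neg hlj, if_neg hlj]
        rcases eq_or_ne l i with rfl | hli
        · rw [if_pos rfl, if_pos rfl, if_pos rfl]; ring
        · rw [if_neg hli, if_neg hli, if_neg hli]; ring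

end
end Stmt4

open Stmt4 in
theorem statement4 (k : ℕ) (N n : Fin k → ℤ)
    (hN : ∀ j, 5 ≤ N j) (hn : ∀ j, 2 ≤ n j ∧ n j ≤ N j - 3)
    (R : Set (Fin k → ℤ))
    (hR : R = ({x : Fin k → ℤ | ∀ j, 0 ≤ x j ∧ x j < N j} \
          Set.range (fun j => Function.update n j 0)) ∪
          Set.range (fun j => Function.update n j (N j)))
    (A : Set (Fin k → ℤ)) :
    (DistinctSums A R ∧ A + R = Set.univ) ↔
      ∃ y : Fin k → ℤ, A = {x | ∀ j, N j ∣ x j - y j} := by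
  have hR2 : R = Rset N n := hR
  subst hR2
  constructor
  · rintro ⟨hD, hcov⟩
    -- Step 1: A is closed under subtracting N j in coordinate j
    have step1 : ∀ a ∈ A, ∀ j : Fin k, (fun i => a i - if i = j then N j else 0) ∈ A := by
      intro a ha j
      have hx : (a + Function.update n j 0) ∈ A + Rset N n := by rw [hcov]; trivial
      obtain ⟨a', ha', r', hr', heq⟩ := Set.mem_add.mp hx
      by_cases hq : r' = Function.update n j (N j)
      · subst hq
        have hval : a' = fun i => a i - if i = j then N j else 0 := by
          funext l
          have h1 := congrFun heq l
          simp only [Pi.add_apply, Function.update_apply] at h1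
          rcases eq_or_ne l j with rfl | hlj
          · rw [if_pos rfl] at h1 ⊢; omega
          · rw [if_neg hlj] at h1 ⊢; omega
        rw [← hval]; exact ha'
      · exfalso
        obtain ⟨f, hf, f', hf', hff⟩ := claimC hN hn j r' hr' hq
        have heq2 : a + f = a' + f' := by
          funext l
          have h1 := congrFun heq l
          have h2 := hff l
          simp only [Pi.add_apply] at h1 ⊢
          omega
        obtain ⟨hae, -⟩ := hD a ha f hf a' ha' f' hf' heq2
        apply p_not_mem hN hn j
        have hrp : r' = Function.update n j 0 := by
          funext l
          have h1 := congrFun heq l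
          rw [← hae] at h1
          simp only [Pi.add_apply] at h1
          omega
        rwa [hrp] at hr'
    -- Step 2: closure under subtracting arbitrary nonneg multiples
    have step2 : ∀ (t : ℕ) (m : Fin k → ℕ) (a : Fin k → ℤ), (∑ i, m i) = t → a ∈ A →
        (fun i => a i - (m i : ℤ) * N i) ∈ A := by
      intro t
      induction t with
      | zero =>
        intro m a hm ha
        have hz : ∀ i, m i = 0 := by
          intro i
          exact Finset.sum_eq_zero_iff.mp hm i (Finset.mem_univ i)
        have : (fun i => a i - (m i : ℤ) * N i) = a := by
          funext i; rw [hz i]; simp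
        rwa [this]
      | succ t ih =>
        intro m a hm ha
        have hex : ∃ i, m i ≠ 0 := by
          by_contra h; push_neg at h
          rw [Finset.sum_eq_zero (fun i _ => h i)] at hm
          omega
        obtain ⟨i0, hi0⟩ := hex
        have hsum : (∑ i, Function.update m i0 (m i0 - 1) i) = t := by
          rw [Finset.sum_update_of_mem (Finset.mem_univ i0)]
          have h2 := Finset.add_sum_erase Finset.univ m (Finset.mem_univ i0)
          have h3 : Finset.univ \ {i0} = Finset.univ.erase i0 := by
            rw [Finset.sdiff_singleton_eq_erase]
          rw [h3]
          omega
        have hb := step1 a ha i0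
        have hih := ih (Function.update m i0 (m i0 - 1)) _ hsum hb
        have hval : (fun i => (fun i => a i - if i = i0 then N i0 else 0) i -
            ((Function.update m i0 (m i0 - 1) i : ℕ) : ℤ) * N i) =
            (fun i => a i - (m i : ℤ) * N i) := by
          funext i
          simp only [Function.update_apply]
          rcases eq_or_ne i i0 with rfl | hii
          · rw [if_pos rfl, if_pos rfl]
            have hcast : ((m i - 1 : ℕ) : ℤ) = (m i : ℤ) - 1 := by
              have : 1 ≤ m i := Nat.one_le_iff_ne_zero.mpr hi0
              omega
            rw [hcast]; ring
          · rw [if_neg hii, if_neg hii]; ring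
        rwa [hval] at hih
    -- A is nonempty
    have hne : A.Nonempty := by
      have h0 : (0 : Fin k → ℤ) ∈ A + Rset N n := by rw [hcov]; trivial
      obtain ⟨a, ha, -, -, -⟩ := Set.mem_add.mp h0
      exact ⟨a, ha⟩
    obtain ⟨y, hy⟩ := hne
    refine ⟨y, ?_⟩
    have hsub : ∀ a ∈ A, ∀ j, N j ∣ a j - y j := by
      intro a ha
      obtain ⟨r1, hr1, hd1⟩ := rep_exists hN hn (fun j => a j - y j)
      obtain ⟨r2, hr2, hd2⟩ := rep_exists hN hn (0 : Fin k → ℤ)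
      have hdt : ∀ j, ∃ t : ℤ, (a j - y j) - (r1 j - r2 j) = N j * t := by
        intro j
        obtain ⟨t1, ht1⟩ := hd1 j
        obtain ⟨t2, ht2⟩ := hd2 j
        simp only [Pi.zero_apply] at ht2
        exact ⟨t1 - t2, by rw [mul_sub, ← ht1, ← ht2]; ring⟩
      choose t ht using hdt
      have hu := step2 (∑ i, (max (t i) 0).toNat) (fun i => (max (t i) 0).toNat) a rfl ha
      have hv := step2 (∑ i, (max (- t i) 0).toNat) (fun i => (max (- t i) 0).toNat) y rfl hy
      have heq2 : (fun i => a i - (((max (t i) 0).toNat : ℤ)) * N i) + r2 =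
          (fun i => y i - (((max (- t i) 0).toNat : ℤ)) * N i) + r1 := by
        funext l
        simp only [Pi.add_apply]
        have h1 := ht l
        have hmp : (((max (t l) 0).toNat : ℤ)) = max (t l) 0 :=
          Int.toNat_of_nonneg (le_max_right _ _)
        have hmm : (((max (- t l) 0).toNat : ℤ)) = max (- t l) 0 :=
          Int.toNat_of_nonneg (le_max_right _ _)
        have hmd : (((max (t l) 0).toNat : ℤ)) - ((max (- t l) 0).toNat : ℤ) = t l := by
          rw [hmp, hmm]; omega
        have hprod : (((max (t l) 0).toNat : ℤ)) * N l - ((max (- t l) 0).toNat : ℤ) * N l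
            = N l * t l := by linear_combination (N l) * hmd
        linarith [h1, hprod]
      obtain ⟨huv, -⟩ := hD _ hu r2 hr2 _ hv r1 hr1 heq2
      intro j
      have h3 := congrFun huv j
      exact ⟨((max (t j) 0).toNat : ℤ) - ((max (- t j) 0).toNat : ℤ), by linear_combination h3⟩
    ext x
    simp only [Set.mem_setOf_eq]
    constructor
    · intro hx j; exact hsub x hx j
    · intro hx
      have hcx : (x + n) ∈ A + Rset N n := by rw [hcov]; trivial
      obtain ⟨a, ha, r, hr, heq⟩ := Set.mem_add.mp hcx
      have hrn : r = n := by
        apply Rset_inj hN hn hr (n_mem hN hn)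
        intro j
        have h1 := congrFun heq j
        simp only [Pi.add_apply] at h1
        obtain ⟨t1, ht1⟩ := hsub a ha j
        obtain ⟨t2, ht2⟩ := hx j
        exact ⟨t2 - t1, by rw [mul_sub, ← ht1, ← ht2]; omega⟩
      subst hrn
      have hax : a = x := by
        funext l
        have h1 := congrFun heq l
        simp only [Pi.add_apply] at h1
        omega
      rwa [← hax]
  · rintro ⟨y, rfl⟩
    constructor
    · intro a ha f hf a' ha' f' hf' heq
      have ha2 : ∀ j, N j ∣ a j - y j := ha
      have ha2' : ∀ j, N j ∣ a' j - y j := ha'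
      have hdvd : ∀ j, N j ∣ f j - f' j := by
        intro j
        have h1 := congrFun heq j
        simp only [Pi.add_apply] at h1
        obtain ⟨t1, ht1⟩ := ha2 j
        obtain ⟨t2, ht2⟩ := ha2' j
        exact ⟨t2 - t1, by rw [mul_sub, ← ht1, ← ht2]; omega⟩
      have hfe : f = f' := Rset_inj hN hn hf hf' hdvd
      subst hfe
      refine ⟨?_, rfl⟩
      funext l
      have h1 := congrFun heq l
      simp only [Pi.add_apply] at h1
      omega
    · ext x
      simp only [Set.mem_univ, iff_true]
      obtain ⟨r, hr, hd⟩ := rep_exists hN hn (fun j => x j - y j)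
      refine Set.mem_add.mpr ⟨x - r, ?_, r, hr, by ring⟩
      intro j
      simp only [Pi.sub_apply]
      have h1 := hd j
      obtain ⟨t1, ht1⟩ := h1
      exact ⟨t1, by omega⟩
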